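/- Under the same setting of the 1D temperature system with fluid heat conduction (positive parameters, boundary conditions T_f(0) = T_s(0) = T_b, T_f'(L) = (h_v A)/(c_p ṁ)(T_s(L) − T_f(L)), (1−φ)κ_s T_s'(L) = q − (c_p ṁ/A)(T_s(L)−T_f(L))) with heat flux q > 0, both T_f and T_s are monotonically increasing on [0, L]; in particular T_f(y) ≥ T_b and T_s(y) ≥ T_b for all y ∈ [0, L]. -/

import Mathlib

open Set Filter Topology

lemma deriv_nonneg_of_min_left {f : ℝ → ℝ} {c d : ℝ} (hf : DifferentiableAt ℝ f c)
    (hcd : c < d) (h : ∀ y ∈ Set.Ioo c d, f c ≤ f y) : 0 ≤ deriv f c := by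
  have hs : Tendsto (slope f c) (𝓝[>] c) (𝓝 (deriv f c)) :=
    (hasDerivAt_iff_tendsto_slope.1 hf.hasDerivAt).mono_left
      (nhdsWithin_mono _ (fun y hy => ne_of_gt hy))
  refine ge_of_tendsto hs ?_
  filter_upwards [Ioo_mem_nhdsGT_of_mem (⟨le_rfl, hcd⟩ : c ∈ Set.Ico c d)] with y hy
  rw [slope_def_field]
  exact div_nonneg (sub_nonneg.2 (h y hy)) (sub_nonneg.2 hy.1.le)

lemma deriv_nonpos_of_min_right {f : ℝ → ℝ} {c d : ℝ} (hf : DifferentiableAt ℝ f d)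
    (hcd : c < d) (h : ∀ y ∈ Set.Ioo c d, f d ≤ f y) : deriv f d ≤ 0 := by
  have hs : Tendsto (slope f d) (𝓝[<] d) (𝓝 (deriv f d)) :=
    (hasDerivAt_iff_tendsto_slope.1 hf.hasDerivAt).mono_left
      (nhdsWithin_mono _ (fun y hy => ne_of_lt hy))
  refine le_of_tendsto hs ?_
  filter_upwards [Ioo_mem_nhdsLT_of_mem (⟨hcd, le_rfl⟩ : d ∈ Set.Ioc c d)] with y hy
  rw [slope_def_field]
  exact div_nonpos_of_nonneg_of_nonpos (sub_nonneg.2 (h y hy)) (sub_nonpos.2 hy.2.le)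

lemma second_deriv_nonneg_of_isLocalMin {f : ℝ → ℝ} {x : ℝ} (hf : ContDiff ℝ 2 f)
    (hmin : IsLocalMin f x) : 0 ≤ deriv (deriv f) x := by
  by_contra hlt
  push_neg at hlt
  have hd1 : deriv f x = 0 := hmin.deriv_eq_zero
  have h2 : ContDiff ℝ 1 (deriv f) := by
    rw [show (2 : WithTop ℕ∞) = 1 + 1 by norm_num, contDiff_succ_iff_deriv] at hf
    exact hf.2.2
  have hc : Continuous (deriv (deriv f)) := h2.continuous_deriv le_rfl
  have hopen : IsOpen {y | deriv (deriv f) y < 0} := isOpen_lt hc continuous_const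
  obtain ⟨ε, hε, hball⟩ := Metric.isOpen_iff.1 hopen x hlt
  -- f' is strictly decreasing on [x, x+ε/2], so f' < 0 on (x, x+ε/2], so f decreasing
  have hsub : Set.Icc x (x + ε/2) ⊆ Metric.ball x ε := by
    intro y hy
    rw [Metric.mem_ball, Real.dist_eq, abs_lt]
    constructor <;> [linarith [hy.1]; linarith [hy.2]]
  have hanti : StrictAntiOn (deriv f) (Set.Icc x (x + ε/2)) := by
    refine strictAntiOn_of_deriv_neg (convex_Icc _ _) (h2.continuous.continuousOn) ?_
    intro y hy
    rw [interior_Icc] at hy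
    exact hball (hsub ⟨hy.1.le, hy.2.le⟩)
  have hf'neg : ∀ y ∈ Set.Ioo x (x + ε/2), deriv f y < 0 := by
    intro y hy
    have := hanti ⟨le_rfl, by linarith⟩ ⟨hy.1.le, hy.2.le⟩ hy.1
    rwa [hd1] at this
  have hfanti : StrictAntiOn f (Set.Icc x (x + ε/2)) := by
    refine strictAntiOn_of_deriv_neg (convex_Icc _ _)
      (hf.continuous.continuousOn) ?_
    intro y hy; rw [interior_Icc] at hy; exact hf'neg y hy
  obtain ⟨ε2, hε2, hmem⟩ := Metric.eventually_nhds_iff.1 hmin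
  have hmin2 : 0 < min (ε/2) ε2 / 2 := by
    have h1 : 0 < ε/2 := by linarith
    have : 0 < min (ε/2) ε2 := lt_min h1 hε2
    linarith
  set y := x + min (ε/2) ε2 / 2 with hy
  have hylt : x < y := by rw [hy]; linarith
  have hyle : y ≤ x + ε/2 := by
    have := min_le_left (ε/2) ε2
    rw [hy]; linarith
  have h1 : f y < f x := hfanti ⟨le_rfl, by linarith⟩ ⟨hylt.le, hyle⟩ hylt
  have h2' : f x ≤ f y := by
    apply hmem
    rw [Real.dist_eq, hy]
    have := min_le_right (ε/2) ε2
    rw [abs_lt]; constructor <;> linarith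
  linarith


set_option maxHeartbeats 2000000 in
theorem temp_monotone
    (phi kf ks cp mdot A hv Tb q L : ℝ)
    (hphi : 0 < phi) (hphi1 : phi < 1) (hkf : 0 < kf) (hks : 0 < ks)
    (hcp : 0 < cp) (hm : 0 < mdot) (hA : 0 < A) (hhv : 0 < hv)
    (hL : 0 < L) (hq : 0 < q)
    (Tf Ts : ℝ → ℝ) (hTf : ContDiff ℝ 2 Tf) (hTs : ContDiff ℝ 2 Ts)
    (hodef : ∀ y ∈ Set.Ioo 0 L,
      -(phi * kf) * deriv (deriv Tf) y + (cp * mdot / A) * deriv Tf y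
        = hv * (Ts y - Tf y))
    (hodes : ∀ y ∈ Set.Ioo 0 L,
      (1 - phi) * ks * deriv (deriv Ts) y = hv * (Ts y - Tf y))
    (hbc0f : Tf 0 = Tb) (hbc0s : Ts 0 = Tb)
    (hbcLf : deriv Tf L = hv * A / (cp * mdot) * (Ts L - Tf L))
    (hbcLs : (1 - phi) * ks * deriv Ts L = q - cp * mdot / A * (Ts L - Tf L)) :
    MonotoneOn Tf (Set.Icc 0 L) ∧ MonotoneOn Ts (Set.Icc 0 L) ∧
    (∀ y ∈ Set.Icc 0 L, Tb ≤ Tf y) ∧ (∀ y ∈ Set.Icc 0 L, Tb ≤ Ts y) := by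
  set a := phi * kf with ha_def
  set b := (1 - phi) * ks with hb_def
  set m := cp * mdot / A with hm_def
  have ha : 0 < a := mul_pos hphi hkf
  have hb : 0 < b := mul_pos (by linarith) hks
  have hm0 : 0 < m := by rw [hm_def]; positivity
  -- differentiability facts
  have hTfsplit : Differentiable ℝ Tf ∧ ContDiff ℝ 1 (deriv Tf) := by
    rw [show (2 : WithTop ℕ∞) = 1 + 1 by norm_num, contDiff_succ_iff_deriv] at hTf
    exact ⟨hTf.1, hTf.2.2⟩
  have hTssplit : Differentiable ℝ Ts ∧ ContDiff ℝ 1 (deriv Ts) := by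
    rw [show (2 : WithTop ℕ∞) = 1 + 1 by norm_num, contDiff_succ_iff_deriv] at hTs
    exact ⟨hTs.1, hTs.2.2⟩
  obtain ⟨hdTf, hTf1⟩ := hTfsplit
  obtain ⟨hdTs, hTs1⟩ := hTssplit
  have hdTf' : Differentiable ℝ (deriv Tf) := hTf1.differentiable one_ne_zero
  have hdTs' : Differentiable ℝ (deriv Ts) := hTs1.differentiable one_ne_zero
  have hWderiv : ∀ y, deriv (fun z => Ts z - Tf z) y = deriv Ts y - deriv Tf y :=
    fun y => deriv_fun_sub (hdTs y) (hdTf y)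
  -- rewritten ODEs
  have hf'' : ∀ y ∈ Set.Ioo 0 L,
      deriv (deriv Tf) y = (m * deriv Tf y - hv * (Ts y - Tf y)) / a := by
    intro y hy
    have h := hodef y hy
    rw [eq_div_iff ha.ne']
    linarith
  have hs'' : ∀ y ∈ Set.Ioo 0 L,
      deriv (deriv Ts) y = hv * (Ts y - Tf y) / b := by
    intro y hy
    have h := hodes y hy
    rw [eq_div_iff hb.ne']
    linarith
  -- rewritten BCs
  have hbcLf' : deriv Tf L = hv / m * (Ts L - Tf L) := by
    rw [hbcLf, hm_def]
    field_simp
  have hbcLs' : deriv Ts L = (q - m * (Ts L - Tf L)) / b := by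
    rw [eq_div_iff hb.ne']
    linarith
  have hW0 : Ts 0 - Tf 0 = 0 := by rw [hbc0f, hbc0s]; ring
  -- Step A: Ts - Tf ≥ 0 on [0, L]
  have hWcont : Continuous (fun y => Ts y - Tf y) := hTs.continuous.sub hTf.continuous
  obtain ⟨y0, hy0m, hy0min⟩ := (isCompact_Icc : IsCompact (Set.Icc (0:ℝ) L)).exists_isMinOn
    (Set.nonempty_Icc.2 hL.le) hWcont.continuousOn
  have hy0min' : ∀ y ∈ Set.Icc 0 L, Ts y0 - Tf y0 ≤ Ts y - Tf y := fun y hy => hy0min hy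
  have key : 0 ≤ Ts y0 - Tf y0 := by
    by_contra hneg
    push_neg at hneg
    have hy0ne0 : y0 ≠ 0 := by
      intro h; rw [h, hW0] at hneg; exact lt_irrefl 0 hneg
    have hy0neL : y0 ≠ L := by
      intro h
      rw [h] at hneg
      -- min at right endpoint: deriv of W at L is ≤ 0, but BCs force it > 0
      have hd0 : deriv (fun z => Ts z - Tf z) L ≤ 0 := by
        refine deriv_nonpos_of_min_right ((hdTs L).sub (hdTf L)) hL ?_
        intro y hy
        have h5 := hy0min' y (Set.Ioo_subset_Icc_self hy)
        rw [h] at h5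
        exact h5
      rw [hWderiv L, hbcLs', hbcLf'] at hd0
      have h1 : 0 < (q - m * (Ts L - Tf L)) / b := div_pos (by nlinarith) hb
      have h2 : 0 < hv / m := div_pos hhv hm0
      have h3 : 0 < hv / m * (-(Ts L - Tf L)) := mul_pos h2 (by linarith)
      nlinarith
    have hy0io : y0 ∈ Set.Ioo 0 L :=
      ⟨lt_of_le_of_ne hy0m.1 (Ne.symm hy0ne0), lt_of_le_of_ne hy0m.2 hy0neL⟩
    have hloc : IsLocalMin (fun z => Ts z - Tf z) y0 :=
      hy0min.isLocalMin (Icc_mem_nhds hy0io.1 hy0io.2)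
    have h2nd : 0 ≤ deriv (deriv (fun z => Ts z - Tf z)) y0 :=
      second_deriv_nonneg_of_isLocalMin (hTs.sub hTf) hloc
    have hW'0 : deriv (fun z => Ts z - Tf z) y0 = 0 := hloc.deriv_eq_zero
    rw [hWderiv y0] at hW'0
    have hdd : deriv (deriv (fun z => Ts z - Tf z)) y0
        = deriv (deriv Ts) y0 - deriv (deriv Tf) y0 := by
      rw [show deriv (fun z => Ts z - Tf z) = fun y => deriv Ts y - deriv Tf y
        from funext hWderiv]
      exact deriv_fun_sub (hdTs' y0) (hdTf' y0)
    rw [hdd, hs'' y0 hy0io, hf'' y0 hy0io] at h2nd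
    set W0 := Ts y0 - Tf y0 with hW0def
    set v0 := deriv Tf y0 with hv0def
    set δ := -W0 with hδdef
    have hδ : 0 < δ := by rw [hδdef]; linarith
    set V := hv / m * (1 + a / b) * δ with hVdef
    have habpos : 0 < a / b := div_pos ha hb
    have hV : 0 < V := by
      rw [hVdef]
      have h1 : 0 < hv / m := div_pos hhv hm0
      exact mul_pos (mul_pos h1 (by linarith)) hδ
    -- from the second-derivative inequality: v0 ≤ -V
    have hv0V : v0 ≤ -V := by
      have h : (m * v0 - hv * W0) / a ≤ hv * W0 / b := by linarith
      rw [div_le_div_iff₀ ha hb] at h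
      rw [hVdef, hδdef]
      rw [show -(hv / m * (1 + a / b) * -W0) = (hv * W0 * b + hv * W0 * a) / (m * b) by
        field_simp]
      rw [le_div_iff₀ (mul_pos hm0 hb)]
      linarith [h]
    have hmV : m * V = hv * (1 + a / b) * δ := by
      rw [hVdef]
      field_simp
    -- integrating factor argument on [y0, L]
    set φ := fun y => (deriv Tf y + V) * Real.exp (-(m / a) * y) with hφdef
    have hφanti : AntitoneOn φ (Set.Icc y0 L) := by
      refine antitoneOn_of_deriv_nonpos (convex_Icc _ _) ?_ ?_ ?_
      · exact ((hTf1.continuous.add continuous_const).mul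
          ((continuous_const.mul continuous_id).rexp)).continuousOn
      · intro y hy
        exact (((hdTf'.add_const V).mul
          ((differentiable_id.const_mul _).exp)) y).differentiableWithinAt
      · intro y hy
        rw [interior_Icc] at hy
        have hyio : y ∈ Set.Ioo 0 L := ⟨hy0io.1.trans hy.1, hy.2⟩
        have h1 : HasDerivAt (fun z => deriv Tf z + V) (deriv (deriv Tf) y) y :=
          ((hdTf' y).hasDerivAt).add_const V
        have h2 : HasDerivAt (fun z => Real.exp (-(m / a) * z))
            (Real.exp (-(m / a) * y) * (-(m / a))) y := by
          simpa using (((hasDerivAt_id y).const_mul (-(m / a))).exp)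
        have hder : deriv φ y = deriv (deriv Tf) y * Real.exp (-(m / a) * y)
            + (deriv Tf y + V) * (Real.exp (-(m / a) * y) * (-(m / a))) :=
          (h1.mul h2).deriv
        rw [hder, hf'' y hyio]
        have hWy : -δ ≤ Ts y - Tf y := by
          have := hy0min' y (Set.Ioo_subset_Icc_self hyio)
          rw [hδdef]; linarith
        have hexp : 0 < Real.exp (-(m / a) * y) := Real.exp_pos _
        have hc' : 0 ≤ hv * (Ts y - Tf y) + m * V := by
          rw [hmV]
          nlinarith [mul_le_mul_of_nonneg_left hWy hhv.le,
            mul_pos (mul_pos hhv habpos) hδ]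
        have hc : (m * deriv Tf y - hv * (Ts y - Tf y)) / a
            + (deriv Tf y + V) * (-(m / a)) ≤ 0 := by
          rw [show (m * deriv Tf y - hv * (Ts y - Tf y)) / a
              + (deriv Tf y + V) * (-(m / a))
              = -((hv * (Ts y - Tf y) + m * V) / a) by field_simp; ring]
          exact neg_nonpos.2 (div_nonneg hc' ha.le)
        nlinarith [mul_nonpos_of_nonpos_of_nonneg hc hexp.le]
    -- conclude: φ L ≤ φ y0 ≤ 0, so deriv Tf L ≤ -V, contradiction with BC
    have hφy0 : φ y0 ≤ 0 := by
      rw [hφdef]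
      exact mul_nonpos_of_nonpos_of_nonneg (by rw [← hv0def]; linarith)
        (Real.exp_pos _).le
    have hφL : φ L ≤ 0 :=
      le_trans (hφanti ⟨le_rfl, hy0io.2.le⟩ ⟨hy0io.2.le, le_rfl⟩ hy0io.2.le) hφy0
    have hvL : deriv Tf L ≤ -V := by
      rw [hφdef] at hφL
      nlinarith [Real.exp_pos (-(m / a) * L)]
    have hWL : -δ ≤ Ts L - Tf L := by
      have := hy0min' L ⟨hL.le, le_rfl⟩
      rw [hδdef]; linarith
    rw [hbcLf'] at hvL
    have h2 : 0 < hv / m := div_pos hhv hm0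
    -- hv/m * WL ≥ hv/m * (-δ) > -V
    have h3 : hv / m * (-δ) ≤ hv / m * (Ts L - Tf L) := by nlinarith
    rw [hVdef] at hvL
    nlinarith
  have hWnn : ∀ y ∈ Set.Icc 0 L, 0 ≤ Ts y - Tf y :=
    fun y hy => le_trans key (hy0min' y hy)
  -- Step B: deriv Tf ≥ 0 on [0, L]
  have hψanti : AntitoneOn (fun y => deriv Tf y * Real.exp (-(m / a) * y))
      (Set.Icc 0 L) := by
    refine antitoneOn_of_deriv_nonpos (convex_Icc _ _) ?_ ?_ ?_
    · exact (hTf1.continuous.mul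
        ((continuous_const.mul continuous_id).rexp)).continuousOn
    · intro y hy
      exact ((hdTf'.mul ((differentiable_id.const_mul _).exp)) y).differentiableWithinAt
    · intro y hy
      rw [interior_Icc] at hy
      have h1 : HasDerivAt (deriv Tf) (deriv (deriv Tf) y) y := (hdTf' y).hasDerivAt
      have h2 : HasDerivAt (fun z => Real.exp (-(m / a) * z))
          (Real.exp (-(m / a) * y) * (-(m / a))) y := by
        simpa using (((hasDerivAt_id y).const_mul (-(m / a))).exp)
      have hder : deriv (fun z => deriv Tf z * Real.exp (-(m / a) * z)) y
          = deriv (deriv Tf) y * Real.exp (-(m / a) * y)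
          + deriv Tf y * (Real.exp (-(m / a) * y) * (-(m / a))) :=
        (h1.mul h2).deriv
      rw [hder, hf'' y hy]
      have hWy : 0 ≤ Ts y - Tf y := hWnn y (Set.Ioo_subset_Icc_self hy)
      have hexp : 0 < Real.exp (-(m / a) * y) := Real.exp_pos _
      have hc : (m * deriv Tf y - hv * (Ts y - Tf y)) / a
          + deriv Tf y * (-(m / a)) ≤ 0 := by
        rw [show (m * deriv Tf y - hv * (Ts y - Tf y)) / a + deriv Tf y * (-(m / a))
            = -(hv * (Ts y - Tf y) / a) by field_simp; ring]
        exact neg_nonpos.2 (div_nonneg (by nlinarith) ha.le)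
      nlinarith [mul_nonpos_of_nonpos_of_nonneg hc hexp.le]
  have hvnn : ∀ y ∈ Set.Icc 0 L, 0 ≤ deriv Tf y := by
    intro y hy
    have hWL : 0 ≤ Ts L - Tf L := hWnn L ⟨hL.le, le_rfl⟩
    have hψL : 0 ≤ deriv Tf L * Real.exp (-(m / a) * L) := by
      rw [hbcLf']
      have h2 : 0 ≤ hv / m := (div_pos hhv hm0).le
      positivity
    have := hψanti hy ⟨hL.le, le_rfl⟩ hy.2
    have hexp : 0 < Real.exp (-(m / a) * y) := Real.exp_pos _
    nlinarith
  -- Step C: Tf monotone; Tf ≥ Tb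
  have hTfmono : MonotoneOn Tf (Set.Icc 0 L) := by
    refine monotoneOn_of_deriv_nonneg (convex_Icc _ _) hTf.continuous.continuousOn
      (fun y hy => (hdTf y).differentiableWithinAt) ?_
    intro y hy
    rw [interior_Icc] at hy
    exact hvnn y (Set.Ioo_subset_Icc_self hy)
  -- Step D: deriv Ts ≥ 0 on [0, L], Ts monotone
  have hs0 : 0 ≤ deriv Ts 0 := by
    have hd : 0 ≤ deriv (fun z => Ts z - Tf z) 0 := by
      refine deriv_nonneg_of_min_left ((hdTs 0).sub (hdTf 0)) hL ?_
      intro y hy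
      rw [hW0]
      exact hWnn y (Set.Ioo_subset_Icc_self hy)
    rw [hWderiv 0] at hd
    have := hvnn 0 ⟨le_rfl, hL.le⟩
    linarith
  have hsmono : MonotoneOn (deriv Ts) (Set.Icc 0 L) := by
    refine monotoneOn_of_deriv_nonneg (convex_Icc _ _) hTs1.continuous.continuousOn
      (fun y hy => (hdTs' y).differentiableWithinAt) ?_
    intro y hy
    rw [interior_Icc] at hy
    rw [hs'' y hy]
    exact div_nonneg (by nlinarith [hWnn y (Set.Ioo_subset_Icc_self hy)]) hb.le
  have hsnn : ∀ y ∈ Set.Icc 0 L, 0 ≤ deriv Ts y := by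
    intro y hy
    exact le_trans hs0 (hsmono ⟨le_rfl, hL.le⟩ hy hy.1)
  have hTsmono : MonotoneOn Ts (Set.Icc 0 L) := by
    refine monotoneOn_of_deriv_nonneg (convex_Icc _ _) hTs.continuous.continuousOn
      (fun y hy => (hdTs y).differentiableWithinAt) ?_
    intro y hy
    rw [interior_Icc] at hy
    exact hsnn y (Set.Ioo_subset_Icc_self hy)
  refine ⟨hTfmono, hTsmono, ?_, ?_⟩
  · intro y hy
    have := hTfmono ⟨le_rfl, hL.le⟩ hy hy.1
    rw [hbc0f] at this
    exact this
  · intro y hy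
    have := hTsmono ⟨le_rfl, hL.le⟩ hy hy.1
    rw [hbc0s] at this
    exact this
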